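/- If a vector x with strictly positive entries weakly supermajorizes a vector y with strictly positive entries, then x is p-larger than y, i.e., for each j = 1,...,n, the product of the j smallest entries of x is at most the product of the j smallest entries of y. -/

import Mathlib

open Finset

/-- Increasing rearrangement of a vector. -/
noncomputable def incSort {n : ℕ} (x : Fin n → ℝ) : Fin n → ℝ := x ∘ Tuple.sort x

/-- Sum of the `j` smallest entries. -/
noncomputable def psum {n : ℕ} (s : Fin n → ℝ) (j : ℕ) : ℝ :=
  ∑ i : Fin n, if (i : ℕ) < j then s i else 0

/-- Product of the `j` smallest entries. -/
noncomputable def pprod {n : ℕ} (s : Fin n → ℝ) (j : ℕ) : ℝ :=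
  ∏ i : Fin n, if (i : ℕ) < j then s i else 1

/-- `x` weakly supermajorizes `y`. -/
def WeakSupermajorizes {n : ℕ} (x y : Fin n → ℝ) : Prop :=
  ∀ j ≤ n, psum (incSort x) j ≤ psum (incSort y) j

/-- `x` is p-larger than `y`. -/
def PLarger {n : ℕ} (x y : Fin n → ℝ) : Prop :=
  ∀ j ≤ n, pprod (incSort x) j ≤ pprod (incSort y) j

/-! ### Auxiliary: divided difference of `log` -/

noncomputable def dd (a b : ℝ) : ℝ :=
  if a = b then 1 / a else (Real.log b - Real.log a) / (b - a)

lemma dd_symm (a b : ℝ) : dd a b = dd b a := by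
  unfold dd
  rcases eq_or_ne a b with rfl | h
  · simp
  · rw [if_neg h, if_neg (Ne.symm h), ← neg_div_neg_eq]
    ring_nf

lemma dd_mul (a b : ℝ) (hab : a ≠ b) :
    Real.log b - Real.log a = dd a b * (b - a) := by
  unfold dd
  rw [if_neg hab, div_mul_cancel₀ _ (sub_ne_zero.mpr (Ne.symm hab))]

lemma dd_mul' (a b : ℝ) : Real.log b - Real.log a = dd a b * (b - a) := by
  rcases eq_or_ne a b with rfl | h
  · simp
  · exact dd_mul a b h

lemma dd_pos {a b : ℝ} (ha : 0 < a) (hb : 0 < b) : 0 < dd a b := by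
  unfold dd
  rcases eq_or_ne a b with rfl | h
  · simp [ha]
  · rw [if_neg h]
    rcases lt_or_gt_of_ne h with hlt | hlt
    · exact div_pos (by linarith [Real.log_lt_log ha hlt]) (by linarith)
    · apply div_pos_of_neg_of_neg (by linarith [Real.log_lt_log hb hlt]) (by linarith)

/-- For `0 < u < v`, `dd u v ≤ 1/u`. -/
lemma dd_le_inv_left {u v : ℝ} (hu : 0 < u) (huv : u < v) : dd u v ≤ 1 / u := by
  unfold dd
  rw [if_neg (ne_of_lt huv)]
  have hv : 0 < v := hu.trans huv
  have h1 : Real.log v - Real.log u ≤ v / u - 1 := by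
    have := Real.log_le_sub_one_of_pos (show (0:ℝ) < v / u by positivity)
    rwa [Real.log_div hv.ne' hu.ne'] at this
  rw [div_le_div_iff₀ (by linarith) hu]
  have : v / u - 1 = (v - u) / u := by field_simp
  rw [this] at h1
  calc (Real.log v - Real.log u) * u ≤ ((v - u) / u) * u := by
        apply mul_le_mul_of_nonneg_right h1 hu.le
    _ = v - u := by field_simp
    _ = 1 * (v - u) := by ring

/-- For `0 < u < v`, `1/v ≤ dd u v`. -/
lemma inv_le_dd_right {u v : ℝ} (hu : 0 < u) (huv : u < v) : 1 / v ≤ dd u v := by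
  unfold dd
  rw [if_neg (ne_of_lt huv)]
  have hv : 0 < v := hu.trans huv
  have h1 : Real.log u - Real.log v ≤ u / v - 1 := by
    have := Real.log_le_sub_one_of_pos (show (0:ℝ) < u / v by positivity)
    rwa [Real.log_div hu.ne' hv.ne'] at this
  rw [div_le_div_iff₀ hv (by linarith)]
  have h2 : Real.log v - Real.log u ≥ (v - u) / v := by
    have : u / v - 1 = -((v - u) / v) := by field_simp; ring
    rw [this] at h1; linarith
  calc 1 * (v - u) = v - u := by ring
    _ = ((v - u) / v) * v := by field_simp
    _ ≤ (Real.log v - Real.log u) * v := by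
        apply mul_le_mul_of_nonneg_right h2 hv.le

/-- `dd` is antitone in the second variable (on positives). -/
lemma dd_anti_right {a b b' : ℝ} (ha : 0 < a) (hb : 0 < b) (hb' : 0 < b')
    (h : b ≤ b') : dd a b' ≤ dd a b := by
  rcases eq_or_lt_of_le h with rfl | hlt
  · exact le_refl _
  rcases eq_or_ne b a with heq | hba
  · rw [heq] at hlt ⊢
    rw [show dd a a = 1 / a from by simp [dd]]
    exact dd_le_inv_left ha hlt
  rcases eq_or_ne b' a with heq | hb'a
  · rw [heq] at hlt ⊢
    rw [show dd a a = 1 / a from by simp [dd]]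
    have h1 : 1 / a ≤ dd b a := inv_le_dd_right hb hlt
    rwa [dd_symm] at h1
  · -- general case: secant monotonicity for the convex function -log
    have hconv : ConvexOn ℝ (Set.Ioi (0:ℝ)) (-Real.log) :=
      (strictConcaveOn_log_Ioi.concaveOn).neg
    have key := hconv.secant_mono
      (Set.mem_Ioi.mpr ha) (Set.mem_Ioi.mpr hb) (Set.mem_Ioi.mpr hb') hba hb'a h
    simp only [Pi.neg_apply] at key
    unfold dd
    rw [if_neg (fun hh : a = b' => hb'a hh.symm), if_neg (fun hh : a = b => hba hh.symm)]
    have e1 : (-Real.log b - -Real.log a) / (b - a) = -((Real.log b - Real.log a) / (b - a)) := by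
      rw [← neg_div]; ring_nf
    have e2 : (-Real.log b' - -Real.log a) / (b' - a) =
        -((Real.log b' - Real.log a) / (b' - a)) := by
      rw [← neg_div]; ring_nf
    rw [e1, e2] at key
    linarith

/-- `dd` is antitone in both variables jointly (on positives). -/
lemma dd_anti {a a' b b' : ℝ} (ha : 0 < a) (ha' : 0 < a') (hb : 0 < b) (hb' : 0 < b')
    (haa : a ≤ a') (hbb : b ≤ b') : dd a' b' ≤ dd a b := by
  calc dd a' b' = dd b' a' := dd_symm _ _
    _ ≤ dd b' a := dd_anti_right hb' ha ha' haa
    _ = dd a b' := dd_symm _ _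
    _ ≤ dd a b := dd_anti_right ha hb hb' hbb

/-- Abel summation estimate. -/
lemma abel_nonneg (c e : ℕ → ℝ) (j : ℕ) (hc0 : ∀ k, 0 ≤ c k)
    (hcmono : ∀ k, c (k + 1) ≤ c k)
    (hS : ∀ k ≤ j, 0 ≤ ∑ i ∈ range k, e i) :
    c j * (∑ i ∈ range j, e i) ≤ ∑ i ∈ range j, c i * e i := by
  induction j with
  | zero => simp
  | succ j ih =>
    have hS' : ∀ k ≤ j, 0 ≤ ∑ i ∈ range k, e i := fun k hk => hS k (hk.trans (Nat.le_succ j))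
    have h1 := ih hS'
    rw [Finset.sum_range_succ, Finset.sum_range_succ]
    have h2 : c (j + 1) * (∑ i ∈ range j, e i + e j) ≤ c j * (∑ i ∈ range j, e i + e j) := by
      apply mul_le_mul_of_nonneg_right (hcmono j)
      have := hS (j + 1) (le_refl _)
      rwa [Finset.sum_range_succ] at this
    nlinarith [h1, h2]

lemma psum_eq {n : ℕ} (s : Fin n → ℝ) (S : ℕ → ℝ)
    (hS : ∀ k (h : k < n), S k = s ⟨k, h⟩) (j : ℕ) (hj : j ≤ n) :
    psum s j = ∑ k ∈ range j, S k := by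
  unfold psum
  have step1 : (∑ i : Fin n, if (i : ℕ) < j then s i else 0)
      = ∑ i : Fin n, if (i : ℕ) < j then S i else 0 := by
    apply Finset.sum_congr rfl
    intro i _
    by_cases hij : (i : ℕ) < j
    · rw [if_pos hij, if_pos hij, hS i i.isLt]
    · rw [if_neg hij, if_neg hij]
  rw [step1, Fin.sum_univ_eq_sum_range (fun k => if k < j then S k else 0),
    ← Finset.sum_subset (Finset.range_subset_range.mpr hj)]
  · apply Finset.sum_congr rfl
    intro k hk
    rw [if_pos (Finset.mem_range.mp hk)]
  · intro k _ hk
    rw [if_neg (fun h => hk (Finset.mem_range.mpr h))]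

lemma pprod_eq {n : ℕ} (s : Fin n → ℝ) (S : ℕ → ℝ)
    (hS : ∀ k (h : k < n), S k = s ⟨k, h⟩) (j : ℕ) (hj : j ≤ n) :
    pprod s j = ∏ k ∈ range j, S k := by
  unfold pprod
  have step1 : (∏ i : Fin n, if (i : ℕ) < j then s i else 1)
      = ∏ i : Fin n, if (i : ℕ) < j then S i else 1 := by
    apply Finset.prod_congr rfl
    intro i _
    by_cases hij : (i : ℕ) < j
    · rw [if_pos hij, if_pos hij, hS i i.isLt]
    · rw [if_neg hij, if_neg hij]
  rw [step1, Fin.prod_univ_eq_prod_range (fun k => if k < j then S k else 1),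
    ← Finset.prod_subset (Finset.range_subset_range.mpr hj)]
  · apply Finset.prod_congr rfl
    intro k hk
    rw [if_pos (Finset.mem_range.mp hk)]
  · intro k _ hk
    rw [if_neg (fun h => hk (Finset.mem_range.mpr h))]

theorem weak_supermajorizes_implies_plarger {n : ℕ} (x y : Fin n → ℝ)
    (hx : ∀ i, 0 < x i) (hy : ∀ i, 0 < y i)
    (h : WeakSupermajorizes x y) : PLarger x y := by
  intro j hj
  rcases Nat.eq_zero_or_pos j with rfl | hj0
  · simp [pprod]
  have hn : 0 < n := lt_of_lt_of_le hj0 hj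
  set a : Fin n → ℝ := incSort x with ha_def
  set b : Fin n → ℝ := incSort y with hb_def
  have hamono : Monotone a := Tuple.monotone_sort x
  have hbmono : Monotone b := Tuple.monotone_sort y
  have hapos : ∀ i, 0 < a i := fun i => hx _
  have hbpos : ∀ i, 0 < b i := fun i => hy _
  -- extend to ℕ
  set A : ℕ → ℝ := fun k => a ⟨min k (n - 1), by omega⟩ with hA_def
  set B : ℕ → ℝ := fun k => b ⟨min k (n - 1), by omega⟩ with hB_def
  have hApos : ∀ k, 0 < A k := fun k => hapos _
  have hBpos : ∀ k, 0 < B k := fun k => hbpos _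
  have hAmono : Monotone A := by
    intro k k' hkk
    exact hamono (by simp [Fin.le_def]; omega)
  have hBmono : Monotone B := by
    intro k k' hkk
    exact hbmono (by simp [Fin.le_def]; omega)
  have hAa : ∀ k (hk : k < n), A k = a ⟨k, hk⟩ := by
    intro k hk
    simp only [hA_def]
    congr 1
    exact Fin.ext (by simp; omega)
  have hBb : ∀ k (hk : k < n), B k = b ⟨k, hk⟩ := by
    intro k hk
    simp only [hB_def]
    congr 1
    exact Fin.ext (by simp; omega)
  set c : ℕ → ℝ := fun k => dd (A k) (B k) with hc_def
  set e : ℕ → ℝ := fun k => B k - A k with he_def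
  have hc0 : ∀ k, 0 ≤ c k := fun k => (dd_pos (hApos k) (hBpos k)).le
  have hcmono : ∀ k, c (k + 1) ≤ c k := fun k =>
    dd_anti (hApos k) (hApos (k + 1)) (hBpos k) (hBpos (k + 1))
      (hAmono (Nat.le_succ k)) (hBmono (Nat.le_succ k))
  have hS : ∀ k ≤ j, 0 ≤ ∑ i ∈ range k, e i := by
    intro k hk
    have hkn : k ≤ n := hk.trans hj
    have hxy := h k hkn
    rw [psum_eq a A hAa k hkn,
        psum_eq b B hBb k hkn] at hxy
    have he : ∑ i ∈ range k, e i = (∑ i ∈ range k, B i) - (∑ i ∈ range k, A i) := by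
      simp only [he_def]
      exact Finset.sum_sub_distrib _ _
    rw [he]
    linarith
  have key : 0 ≤ ∑ i ∈ range j, c i * e i := by
    have h1 := abel_nonneg c e j hc0 hcmono hS
    have h2 : 0 ≤ c j * ∑ i ∈ range j, e i :=
      mul_nonneg (hc0 j) (hS j (le_refl j))
    linarith
  -- convert to log sums
  have hlog : ∑ i ∈ range j, Real.log (A i) ≤ ∑ i ∈ range j, Real.log (B i) := by
    have heq : ∑ i ∈ range j, (Real.log (B i) - Real.log (A i)) = ∑ i ∈ range j, c i * e i := by
      apply Finset.sum_congr rfl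
      intro i _
      exact dd_mul' (A i) (B i)
    rw [Finset.sum_sub_distrib] at heq
    linarith [key, heq]
  -- conclude
  rw [pprod_eq a A hAa j hj,
      pprod_eq b B hBb j hj]
  have hprodA : (0:ℝ) < ∏ k ∈ range j, A k := Finset.prod_pos fun i _ => hApos _
  have hprodB : (0:ℝ) < ∏ k ∈ range j, B k := Finset.prod_pos fun i _ => hBpos _
  rw [← Real.log_le_log_iff hprodA hprodB]
  rw [Real.log_prod (fun i _ => (hApos _).ne'), Real.log_prod (fun i _ => (hBpos _).ne')]
  exact hlog
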